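/- arXiv:1709.09790 — 7 statements merged into one kernel-verified Lean document; each statement's English description precedes it below -/
import Mathlib

section
/- Let F be a field of characteristic different from 2 and 3, let s ∈ F*, and let g_s = diag(1,s) ∈ GL₂(F). Then the twisted action map f ↦ s⁻¹·(g_s·f) sends every binary cubic form over F of discriminant Δ to a binary cubic form of discriminant s²·Δ, and for each fixed Δ ∈ F it induces a bijection between the set of SL₂(F)-orbits of binary cubic forms of discriminant Δ and the set of SL₂(F)-orbits of binary cubic forms of discriminant s²·Δ. -/
/-- A binary cubic form `a x³ + 3b x²y + 3c xy² + d y³` over a commutative ring,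
recorded by its coefficient quadruple `(a, b, c, d)`. -/
structure BinaryCubic (R : Type*) [CommRing R] where
  a : R
  b : R
  c : R
  d : R

namespace BinaryCubic

variable {R : Type*} [CommRing R]

/-- Evaluation of the binary cubic form `a x³ + 3b x²y + 3c xy² + d y³`. -/
def eval (f : BinaryCubic R) (x y : R) : R :=
  f.a * x ^ 3 + 3 * f.b * x ^ 2 * y + 3 * f.c * x * y ^ 2 + f.d * y ^ 3

/-- The discriminant `a²d² − 3b²c² + 4ac³ + 4b³d − 6abcd` of a binary cubic form. -/
def disc (f : BinaryCubic R) : R :=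
  f.a ^ 2 * f.d ^ 2 - 3 * f.b ^ 2 * f.c ^ 2 + 4 * f.a * f.c ^ 3 + 4 * f.b ^ 3 * f.d
    - 6 * f.a * f.b * f.c * f.d

/-- The action of a 2×2 matrix `g = (p q; r s)` on binary cubic forms by linear change of
variables: `(g · f)(x, y) = f (p x + q y) (r x + s y)`, written out on coefficients. -/
def act (g : Matrix (Fin 2) (Fin 2) R) (f : BinaryCubic R) : BinaryCubic R where
  a := f.a * g 0 0 ^ 3 + 3 * f.b * g 0 0 ^ 2 * g 1 0 + 3 * f.c * g 0 0 * g 1 0 ^ 2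
      + f.d * g 1 0 ^ 3
  b := f.a * g 0 0 ^ 2 * g 0 1
      + f.b * (g 0 0 ^ 2 * g 1 1 + 2 * g 0 0 * g 0 1 * g 1 0)
      + f.c * (2 * g 0 0 * g 1 0 * g 1 1 + g 0 1 * g 1 0 ^ 2)
      + f.d * g 1 0 ^ 2 * g 1 1
  c := f.a * g 0 0 * g 0 1 ^ 2
      + f.b * (g 0 1 ^ 2 * g 1 0 + 2 * g 0 0 * g 0 1 * g 1 1)
      + f.c * (g 0 0 * g 1 1 ^ 2 + 2 * g 0 1 * g 1 0 * g 1 1)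
      + f.d * g 1 0 * g 1 1 ^ 2
  d := f.a * g 0 1 ^ 3 + 3 * f.b * g 0 1 ^ 2 * g 1 1 + 3 * f.c * g 0 1 * g 1 1 ^ 2
      + f.d * g 1 1 ^ 3

/-- Sanity check: `act` really is the linear change of variables. -/
theorem eval_act (g : Matrix (Fin 2) (Fin 2) R) (f : BinaryCubic R) (x y : R) :
    (act g f).eval x y = f.eval (g 0 0 * x + g 0 1 * y) (g 1 0 * x + g 1 1 * y) := by
  simp only [eval, act]; ring

/-- Two binary cubic forms over `R` are `SL₂(R)`-equivalent if they are related by a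
determinant-one linear change of variables. -/
def SLEquiv (f f' : BinaryCubic R) : Prop :=
  ∃ g : Matrix (Fin 2) (Fin 2) R, g.det = 1 ∧ act g f = f'

/-- Scalar multiplication of a binary cubic form (multiplying all coefficients). -/
def smul (r : R) (f : BinaryCubic R) : BinaryCubic R :=
  ⟨r * f.a, r * f.b, r * f.c, r * f.d⟩

/-- The scaled Hessian `h_f(x,y) = (b²−ac)x² + (bc−ad)xy + (c²−bd)y²` of a binary cubic form. -/
def hess (f : BinaryCubic R) (x y : R) : R :=
  (f.b ^ 2 - f.a * f.c) * x ^ 2 + (f.b * f.c - f.a * f.d) * x * y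
    + (f.c ^ 2 - f.b * f.d) * y ^ 2

/-- The Jacobian covariant `g_f = f_x · (h_f)_y − f_y · (h_f)_x` of a binary cubic form,
written out as a function of `x` and `y`. -/
def gcov (f : BinaryCubic R) (x y : R) : R :=
  (3 * f.a * x ^ 2 + 6 * f.b * x * y + 3 * f.c * y ^ 2)
      * ((f.b * f.c - f.a * f.d) * x + 2 * (f.c ^ 2 - f.b * f.d) * y)
    - (3 * f.b * x ^ 2 + 6 * f.c * x * y + 3 * f.d * y ^ 2)
      * (2 * (f.b ^ 2 - f.a * f.c) * x + (f.b * f.c - f.a * f.d) * y)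

/-- A binary cubic form over a field is reducible if it factors as a homogeneous linear form
times a homogeneous quadratic form over the field. -/
def Reducible {F : Type*} [Field F] (f : BinaryCubic F) : Prop :=
  ∃ l₁ l₂ q₁ q₂ q₃ : F, ∀ x y : F,
    f.eval x y = (l₁ * x + l₂ * y) * (q₁ * x ^ 2 + q₂ * x * y + q₃ * y ^ 2)

/-- Coefficientwise image of a binary cubic form under a ring homomorphism. -/
def map {R S : Type*} [CommRing R] [CommRing S] (φ : R →+* S) (f : BinaryCubic R) :
    BinaryCubic S :=
  ⟨φ f.a, φ f.b, φ f.c, φ f.d⟩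

end BinaryCubic

namespace TwAux
open BinaryCubic

variable {F : Type*} [Field F]

lemma act_smul {R : Type*} [CommRing R] (g : Matrix (Fin 2) (Fin 2) R) (r : R)
    (f : BinaryCubic R) : act g (smul r f) = smul r (act g f) := by
  unfold act smul
  simp only [BinaryCubic.mk.injEq]
  refine ⟨by ring, by ring, by ring, by ring⟩

lemma act_mul {R : Type*} [CommRing R] (g g' : Matrix (Fin 2) (Fin 2) R)
    (f : BinaryCubic R) : act (g * g') f = act g' (act g f) := by
  unfold act
  simp only [Matrix.mul_apply, Fin.sum_univ_two, BinaryCubic.mk.injEq]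
  refine ⟨by ring, by ring, by ring, by ring⟩

/-- The twisted action in explicit coefficient form. -/
def tw (t : F) (f : BinaryCubic F) : BinaryCubic F :=
  ⟨t⁻¹ * f.a, f.b, t * f.c, t ^ 2 * f.d⟩

lemma e00 {R : Type*} [CommRing R] (a b c d : R) : (!![a, b; c, d]) 0 0 = a := rfl
lemma e01 {R : Type*} [CommRing R] (a b c d : R) : (!![a, b; c, d]) 0 1 = b := rfl
lemma e10 {R : Type*} [CommRing R] (a b c d : R) : (!![a, b; c, d]) 1 0 = c := rfl
lemma e11 {R : Type*} [CommRing R] (a b c d : R) : (!![a, b; c, d]) 1 1 = d := rfl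

lemma entry00 (t : F) : (!![1, 0; 0, t] : Matrix (Fin 2) (Fin 2) F) 0 0 = 1 := rfl
lemma entry01 (t : F) : (!![1, 0; 0, t] : Matrix (Fin 2) (Fin 2) F) 0 1 = 0 := rfl
lemma entry10 (t : F) : (!![1, 0; 0, t] : Matrix (Fin 2) (Fin 2) F) 1 0 = 0 := rfl
lemma entry11 (t : F) : (!![1, 0; 0, t] : Matrix (Fin 2) (Fin 2) F) 1 1 = t := rfl

lemma tw_eq (t : F) (ht : t ≠ 0) (f : BinaryCubic F) :
    smul t⁻¹ (act !![1, 0; 0, t] f) = tw t f := by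
  unfold smul act tw
  rw [entry00, entry01, entry10, entry11]
  simp only [BinaryCubic.mk.injEq]
  refine ⟨by ring, ?_, ?_, ?_⟩ <;> field_simp <;> ring

lemma disc_tw (t : F) (ht : t ≠ 0) (f : BinaryCubic F) :
    disc (tw t f) = t ^ 2 * disc f := by
  unfold disc tw
  field_simp

lemma tw_tw (t : F) (ht : t ≠ 0) (f : BinaryCubic F) :
    tw t⁻¹ (tw t f) = f := by
  unfold tw
  cases f with
  | mk a b c d =>
    simp only [BinaryCubic.mk.injEq, inv_inv]
    refine ⟨?_, trivial, ?_, ?_⟩ <;> field_simp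

lemma slequiv_tw (t : F) (ht : t ≠ 0) (f f' : BinaryCubic F) (h : SLEquiv f f') :
    SLEquiv (tw t f) (tw t f') := by
  obtain ⟨g, hdet, hact⟩ := h
  subst hact
  have hti : t * t⁻¹ = 1 := mul_inv_cancel₀ ht
  refine ⟨!![g 0 0, t * g 0 1; t⁻¹ * g 1 0, g 1 1], ?_, ?_⟩
  · rw [Matrix.det_fin_two] at hdet
    rw [Matrix.det_fin_two_of]
    linear_combination hdet - g 0 1 * g 1 0 * hti
  · have hDm : (!![1, 0; 0, t] : Matrix (Fin 2) (Fin 2) F) *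
        !![g 0 0, t * g 0 1; t⁻¹ * g 1 0, g 1 1] = g * !![1, 0; 0, t] := by
      ext i j
      fin_cases i <;> fin_cases j <;>
        simp only [Fin.mk_zero, Fin.mk_one, Matrix.mul_apply, Fin.sum_univ_two, e00, e01, e10, e11, Fin.isValue, Matrix.cons_val',
          Matrix.cons_val_zero, Matrix.cons_val_one, Matrix.head_cons, Matrix.empty_val',
          Matrix.cons_val_fin_one, Matrix.head_fin_const] <;>
        first
          | ring1
          | (rw [hti, one_mul])
          | (field_simp; try ring1)
    rw [← tw_eq t ht f, ← tw_eq t ht (act g f), act_smul, ← act_mul, ← act_mul, hDm]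

end TwAux

open BinaryCubic in
/-- Over a field `F` of characteristic ≠ 2, 3 with `s ∈ F*`, the twisted action
`f ↦ s⁻¹ · (diag(1,s) · f)` sends forms of discriminant `Δ` to forms of discriminant `s²Δ`, and
induces a bijection between the `SL₂(F)`-orbits of discriminant `Δ` and those of
discriminant `s²Δ`. -/
theorem twisted_action_disc_and_orbit_bijection {F : Type*} [Field F]
    (h2 : (2 : F) ≠ 0) (h3 : (3 : F) ≠ 0) (s : F) (hs : s ≠ 0) (Δ : F) :
    (∀ f : BinaryCubic F, disc f = Δ →
      disc (smul s⁻¹ (act !![1, 0; 0, s] f)) = s ^ 2 * Δ) ∧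
    ∃ e : Quot (fun f g : {f : BinaryCubic F // disc f = Δ} => SLEquiv f.1 g.1) ≃
          Quot (fun f g : {f : BinaryCubic F // disc f = s ^ 2 * Δ} => SLEquiv f.1 g.1),
      ∀ (f : {f : BinaryCubic F // disc f = Δ})
        (htw : disc (smul s⁻¹ (act !![1, 0; 0, s] f.1)) = s ^ 2 * Δ),
        e (Quot.mk _ f) = Quot.mk _ ⟨smul s⁻¹ (act !![1, 0; 0, s] f.1), htw⟩ := by
    classical
  have key : ∀ f : BinaryCubic F,
      smul s⁻¹ (act !![1, 0; 0, s] f) = TwAux.tw s f := TwAux.tw_eq s hs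
  have hdisc : ∀ f : BinaryCubic F, disc f = Δ →
      disc (smul s⁻¹ (act !![1, 0; 0, s] f)) = s ^ 2 * Δ := by
    intro f hf
    rw [key, TwAux.disc_tw s hs, hf]
  refine ⟨hdisc, ?_⟩
  have hdisc' : ∀ f : BinaryCubic F, disc f = s ^ 2 * Δ →
      disc (TwAux.tw s⁻¹ f) = Δ := by
    intro f hf
    rw [TwAux.disc_tw s⁻¹ (inv_ne_zero hs), hf]
    field_simp
  set r₁ := fun f g : {f : BinaryCubic F // disc f = Δ} => SLEquiv f.1 g.1 with hr₁
  set r₂ := fun f g : {f : BinaryCubic F // disc f = s ^ 2 * Δ} => SLEquiv f.1 g.1 with hr₂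
  let T : {f : BinaryCubic F // disc f = Δ} → {f : BinaryCubic F // disc f = s ^ 2 * Δ} :=
    fun f => ⟨TwAux.tw s f.1, by rw [TwAux.disc_tw s hs, f.2]⟩
  let U : {f : BinaryCubic F // disc f = s ^ 2 * Δ} → {f : BinaryCubic F // disc f = Δ} :=
    fun f => ⟨TwAux.tw s⁻¹ f.1, hdisc' f.1 f.2⟩
  let Tq : Quot r₁ → Quot r₂ :=
    Quot.map T (fun f g h => TwAux.slequiv_tw s hs f.1 g.1 h)
  let Uq : Quot r₂ → Quot r₁ :=
    Quot.map U (fun f g h => TwAux.slequiv_tw s⁻¹ (inv_ne_zero hs) f.1 g.1 h)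
  have hUT : ∀ x, Uq (Tq x) = x := by
    intro x
    induction x using Quot.ind with
    | _ f =>
      show Quot.mk r₁ (U (T f)) = Quot.mk r₁ f
      congr 1
      exact Subtype.ext (TwAux.tw_tw s hs f.1)
  have hTU : ∀ x, Tq (Uq x) = x := by
    intro x
    induction x using Quot.ind with
    | _ f =>
      show Quot.mk r₂ (T (U f)) = Quot.mk r₂ f
      congr 1
      apply Subtype.ext
      have := TwAux.tw_tw s⁻¹ (inv_ne_zero hs) f.1
      rwa [inv_inv] at this
  refine ⟨⟨Tq, Uq, hUT, hTU⟩, ?_⟩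
  intro f htw
  show Quot.mk r₂ (T f) = Quot.mk r₂ ⟨smul s⁻¹ (act !![1, 0; 0, s] f.1), htw⟩
  congr 1
  exact Subtype.ext (key f.1).symm
end

section
/- Let R be a discrete valuation ring whose fraction field F has characteristic different from 2 and 3, let D ∈ R be nonzero, let S = R[t]/(t² − D) and K = F[t]/(t² − D), and assume S is the integral closure of R in K (i.e., S is the maximal order in K). If two binary cubic forms over R of discriminant 4D are SL₂(F)-equivalent when regarded as forms over F, then they are SL₂(R)-equivalent; equivalently, every SL₂(F)-orbit of binary cubic forms of discriminant 4D contains at most one SL₂(R)-orbit of forms with coefficients in R. -/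
/-! ### Auxiliary machinery for the proof -/

namespace BinaryCubic

variable {R : Type*} [CommRing R]

@[ext] theorem ext' {f g : BinaryCubic R} (ha : f.a = g.a) (hb : f.b = g.b)
    (hc : f.c = g.c) (hd : f.d = g.d) : f = g := by
  cases f; cases g; simp_all

theorem act_one (f : BinaryCubic R) : act 1 f = f := by
  ext <;> simp [act, Matrix.one_apply]

theorem act_mul (M N : Matrix (Fin 2) (Fin 2) R) (f : BinaryCubic R) :
    act (M * N) f = act N (act M f) := by
  ext <;> simp [act, Matrix.mul_apply, Fin.sum_univ_two] <;> ring

theorem disc_act (M : Matrix (Fin 2) (Fin 2) R) (f : BinaryCubic R) :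
    (act M f).disc = M.det ^ 6 * f.disc := by
  simp only [disc, act, Matrix.det_fin_two]
  ring

theorem map_act {S : Type*} [CommRing S] (φ : R →+* S) (M : Matrix (Fin 2) (Fin 2) R)
    (f : BinaryCubic R) : (act M f).map φ = act (M.map φ) (f.map φ) := by
  ext <;> simp [act, map, Matrix.map_apply, map_ofNat] <;> ring

theorem map_injective {S : Type*} [CommRing S] {φ : R →+* S}
    (hφ : Function.Injective φ) : Function.Injective (map φ) := by
  intro f g h
  injection h with h1 h2 h3 h4
  exact ext' (hφ h1) (hφ h2) (hφ h3) (hφ h4)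

end BinaryCubic

section Smith

variable {R : Type*} [CommRing R]

theorem smith00 (N : Matrix (Fin 2) (Fin 2) R) (h1 : N 0 0 ∣ N 0 1) (h2 : N 0 0 ∣ N 1 0) :
    ∃ (P Q : Matrix (Fin 2) (Fin 2) R) (d1 d2 : R),
      P.det = 1 ∧ Q.det = 1 ∧ P * N * Q = !![d1, 0; 0, d2] := by
  obtain ⟨h, hh⟩ := h2
  obtain ⟨k, hk⟩ := h1
  refine ⟨!![1, 0; -h, 1], !![1, -k; 0, 1], N 0 0, N 1 1 - h * N 0 1,
    by simp [Matrix.det_fin_two_of], by simp [Matrix.det_fin_two_of], ?_⟩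
  rw [Matrix.eta_fin_two N, hh, hk]
  rw [Matrix.eta_fin_two N] at hh hk
  simp only [Matrix.mul_fin_two]
  ext i j
  fin_cases i <;> fin_cases j <;> simp <;> ring

theorem mulw (N : Matrix (Fin 2) (Fin 2) R) :
    N * !![0, 1; -1, 0] = !![-(N 0 1), N 0 0; -(N 1 1), N 1 0] := by
  rw [Matrix.eta_fin_two N]; simp [Matrix.mul_fin_two]

theorem wmul (N : Matrix (Fin 2) (Fin 2) R) :
    !![0, 1; -1, 0] * N = !![N 1 0, N 1 1; -(N 0 0), -(N 0 1)] := by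
  rw [Matrix.eta_fin_two N]; simp [Matrix.mul_fin_two]

theorem smith (N : Matrix (Fin 2) (Fin 2) R)
    (htot : ∀ x y : R, x ∣ y ∨ y ∣ x) :
    ∃ (P Q : Matrix (Fin 2) (Fin 2) R) (d1 d2 : R),
      P.det = 1 ∧ Q.det = 1 ∧ P * N * Q = !![d1, 0; 0, d2] := by
  have pick : ∀ x y : R, ∃ z, (z = x ∨ z = y) ∧ z ∣ x ∧ z ∣ y := fun x y =>
    (htot x y).elim (fun h => ⟨x, Or.inl rfl, dvd_refl x, h⟩)
      (fun h => ⟨y, Or.inr rfl, h, dvd_refl y⟩)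
  have hw : (!![0, 1; -1, 0] : Matrix (Fin 2) (Fin 2) R).det = 1 := by
    simp [Matrix.det_fin_two_of]
  obtain ⟨z1, hz1, h1a, h1b⟩ := pick (N 0 0) (N 0 1)
  obtain ⟨z2, hz2, h2a, h2b⟩ := pick z1 (N 1 0)
  obtain ⟨z3, hz3, h3a, h3b⟩ := pick z2 (N 1 1)
  have d00 : z3 ∣ N 0 0 := h3a.trans (h2a.trans h1a)
  have d01 : z3 ∣ N 0 1 := h3a.trans (h2a.trans h1b)
  have d10 : z3 ∣ N 1 0 := h3a.trans h2b
  have d11 : z3 ∣ N 1 1 := h3b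
  rcases hz3 with rfl | rfl
  · rcases hz2 with rfl | rfl
    · rcases hz1 with rfl | rfl
      · exact smith00 N d01 d10
      · -- dominant at (0,1) : use N * w
        obtain ⟨P, Q, d1, d2, hP, hQ, hPQ⟩ := smith00 (N * !![0, 1; -1, 0])
          (by rw [mulw]; simpa using d00) (by rw [mulw]; simpa using d11.neg_right)
        refine ⟨P, !![0, 1; -1, 0] * Q, d1, d2, hP, by rw [Matrix.det_mul, hw, hQ, one_mul],
          by rw [← hPQ]; noncomm_ring⟩
    · -- dominant at (1,0) : use w * N
      obtain ⟨P, Q, d1, d2, hP, hQ, hPQ⟩ := smith00 (!![0, 1; -1, 0] * N)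
        (by rw [wmul]; simpa using d11) (by rw [wmul]; simpa using d00.neg_right)
      exact ⟨P * !![0, 1; -1, 0], Q, d1, d2, by rw [Matrix.det_mul, hP, hw, one_mul], hQ,
        by rw [← hPQ]; noncomm_ring⟩
  · -- dominant at (1,1) : use w * N * w
    obtain ⟨P, Q, d1, d2, hP, hQ, hPQ⟩ := smith00 (!![0, 1; -1, 0] * N * !![0, 1; -1, 0])
      (by rw [mulw, wmul]; simpa using d10.neg_right) (by rw [mulw, wmul]; simpa using d01)
    exact ⟨P * !![0, 1; -1, 0], !![0, 1; -1, 0] * Q, d1, d2,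
      by rw [Matrix.det_mul, hP, hw, one_mul], by rw [Matrix.det_mul, hw, hQ, one_mul],
      by rw [← hPQ]; noncomm_ring⟩

end Smith

section Cartan

variable {R : Type*} [CommRing R]

def inv2 (M : Matrix (Fin 2) (Fin 2) R) : Matrix (Fin 2) (Fin 2) R :=
  !![M 1 1, -(M 0 1); -(M 1 0), M 0 0]

theorem inv2_det {M : Matrix (Fin 2) (Fin 2) R} (h : M.det = 1) : (inv2 M).det = 1 := by
  rw [Matrix.det_fin_two] at h ⊢
  simp only [inv2]
  simp
  linear_combination h

theorem mul_inv2 {M : Matrix (Fin 2) (Fin 2) R} (h : M.det = 1) : M * inv2 M = 1 := by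
  rw [Matrix.det_fin_two] at h
  rw [← Matrix.ext_iff]
  simp only [Fin.forall_fin_two] <;>
  refine ⟨⟨?_, ?_⟩, ?_, ?_⟩ <;>
    simp [inv2, Matrix.mul_apply, Fin.sum_univ_two, Matrix.one_apply] <;>
    first | linear_combination h | linear_combination -h | ring

theorem inv2_mul {M : Matrix (Fin 2) (Fin 2) R} (h : M.det = 1) : inv2 M * M = 1 := by
  rw [Matrix.det_fin_two] at h
  rw [← Matrix.ext_iff]
  simp only [Fin.forall_fin_two] <;>
  refine ⟨⟨?_, ?_⟩, ?_, ?_⟩ <;>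
    simp [inv2, Matrix.mul_apply, Fin.sum_univ_two, Matrix.one_apply] <;>
    first | linear_combination h | linear_combination -h | ring

variable [IsDomain R] [IsDiscreteValuationRing R]
variable {F : Type*} [Field F] [Algebra R F] [IsFractionRing R F]

theorem dvd_total' (x y : R) : x ∣ y ∨ y ∣ x :=
  (le_total (IsDiscreteValuationRing.addVal R x) (IsDiscreteValuationRing.addVal R y)).imp
    IsDiscreteValuationRing.addVal_le_iff_dvd.mp IsDiscreteValuationRing.addVal_le_iff_dvd.mp

theorem cartan (M : Matrix (Fin 2) (Fin 2) F) (hdet : M.det = 1) :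
    ∃ (A B : Matrix (Fin 2) (Fin 2) R) (r : R), r ≠ 0 ∧ A.det = 1 ∧ B.det = 1 ∧
      M = A.map (algebraMap R F) *
        !![algebraMap R F r, 0; 0, (algebraMap R F r)⁻¹] *
        B.map (algebraMap R F) := by
  have hinj : Function.Injective (algebraMap R F) := IsFractionRing.injective R F
  -- common denominator
  obtain ⟨b, hb⟩ := IsLocalization.exist_integer_multiples (nonZeroDivisors R)
    (Finset.univ : Finset (Fin 2 × Fin 2)) (fun p => M p.1 p.2)
  have hbne : (b : R) ≠ 0 := nonZeroDivisors.ne_zero b.2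
  have hbF : algebraMap R F (b : R) ≠ 0 := fun h => hbne (hinj (h.trans (map_zero _).symm))
  choose Nfun hN using fun p : Fin 2 × Fin 2 => hb p (Finset.mem_univ p)
  set N : Matrix (Fin 2) (Fin 2) R := Matrix.of fun i j => Nfun (i, j) with hNdef
  have hNmap : N.map (algebraMap R F) = algebraMap R F (b : R) • M := by
    ext i j
    simp only [Matrix.map_apply, Matrix.smul_apply, hNdef, Matrix.of_apply]
    rw [hN (i, j)]
    simp [Algebra.smul_def]
  have hdetN : N.det = (b : R) ^ 2 := by
    apply hinj
    have := congrArg Matrix.det hNmap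
    rw [Matrix.det_smul, hdet, mul_one] at this
    rw [RingHom.map_det, RingHom.mapMatrix_apply, this, map_pow]
    simp
  obtain ⟨P, Q, d1, d2, hP, hQ, hPQ⟩ := smith N dvd_total'
  have hd1d2 : d1 * d2 = (b : R) ^ 2 := by
    have := congrArg Matrix.det hPQ
    rw [Matrix.det_mul, Matrix.det_mul, hP, hQ, hdetN, Matrix.det_fin_two_of] at this
    simpa using this.symm
  have hd1 : d1 ≠ 0 := by
    intro h; apply hbne
    rw [h, zero_mul] at hd1d2
    exact (pow_eq_zero_iff two_ne_zero).mp hd1d2.symm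
  have hd2 : d2 ≠ 0 := by
    intro h; apply hbne
    rw [h, mul_zero] at hd1d2
    exact (pow_eq_zero_iff two_ne_zero).mp hd1d2.symm
  have hd1F : algebraMap R F d1 ≠ 0 := fun h => hd1 (hinj (h.trans (map_zero _).symm))
  have hNeq : N = inv2 P * !![d1, 0; 0, d2] * inv2 Q := by
    rw [← hPQ]
    calc N = (inv2 P * P) * N * (Q * inv2 Q) := by rw [inv2_mul hP, mul_inv2 hQ]; simp
    _ = inv2 P * (P * N * Q) * inv2 Q := by noncomm_ring
  -- over F
  have hM : M = (algebraMap R F (b:R))⁻¹ • ((inv2 P).map (algebraMap R F) *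
      !![algebraMap R F d1, 0; 0, algebraMap R F d2] * (inv2 Q).map (algebraMap R F)) := by
    have h1 : (!![d1, 0; 0, d2] : Matrix (Fin 2) (Fin 2) R).map (algebraMap R F)
        = !![algebraMap R F d1, 0; 0, algebraMap R F d2] := by
      ext i j; fin_cases i <;> fin_cases j <;> simp
    rw [← h1, ← Matrix.map_mul, ← Matrix.map_mul, ← hNeq, hNmap, inv_smul_smul₀ hbF]
  have hmid : (algebraMap R F (b:R))⁻¹ • ((inv2 P).map (algebraMap R F) *
        !![algebraMap R F d1, 0; 0, algebraMap R F d2] * (inv2 Q).map (algebraMap R F))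
      = (inv2 P).map (algebraMap R F) *
        !![algebraMap R F d1 / algebraMap R F (b:R), 0;
           0, algebraMap R F d2 / algebraMap R F (b:R)] * (inv2 Q).map (algebraMap R F) := by
    rw [← Matrix.smul_mul, ← Matrix.mul_smul]
    congr 1
    ext i j; fin_cases i <;> fin_cases j <;> simp [div_eq_inv_mul]
  have hprod : (algebraMap R F d1 / algebraMap R F (b:R)) *
      (algebraMap R F d2 / algebraMap R F (b:R)) = 1 := by
    rw [div_mul_div_comm, ← map_mul, hd1d2, map_pow, ← sq]
    exact div_self (pow_ne_zero 2 hbF)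
  rcases dvd_total' (b : R) d1 with ⟨r, hr⟩ | ⟨s, hs⟩
  · -- d1 = b * r ; u = φ r
    have hrne : r ≠ 0 := by rintro rfl; exact hd1 (by simp [hr])
    have hu : algebraMap R F d1 / algebraMap R F (b:R) = algebraMap R F r := by
      rw [hr, map_mul]; exact mul_div_cancel_left₀ _ hbF
    have hu2 : algebraMap R F d2 / algebraMap R F (b:R) = (algebraMap R F r)⁻¹ := by
      rw [← hu]; exact eq_inv_of_mul_eq_one_right hprod
    refine ⟨inv2 P, inv2 Q, r, hrne, inv2_det hP, inv2_det hQ, ?_⟩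
    rw [hM, hmid, hu, hu2]
  · -- b = d1 * s ; u = (φ s)⁻¹
    have hsne : s ≠ 0 := by rintro rfl; exact hbne (by simp [hs])
    have hsF : algebraMap R F s ≠ 0 := fun h => hsne (hinj (h.trans (map_zero _).symm))
    have hu : algebraMap R F d1 / algebraMap R F (b:R) = (algebraMap R F s)⁻¹ := by
      rw [hs, map_mul]; field_simp
    have hu2 : algebraMap R F d2 / algebraMap R F (b:R) = algebraMap R F s := by
      have h' := eq_inv_of_mul_eq_one_right hprod
      rw [hu] at h'
      simpa using h'
    refine ⟨inv2 P * !![0, 1; -1, 0], !![0, -1; 1, 0] * inv2 Q, s, hsne, ?_, ?_, ?_⟩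
    · rw [Matrix.det_mul, inv2_det hP]; simp [Matrix.det_fin_two_of]
    · rw [Matrix.det_mul, inv2_det hQ]; simp [Matrix.det_fin_two_of]
    · rw [hM, hmid, hu, hu2, Matrix.map_mul, Matrix.map_mul]
      have hwmap : (!![0, 1; -1, 0] : Matrix (Fin 2) (Fin 2) R).map (algebraMap R F)
          = !![0, 1; -1, 0] := by ext i j; fin_cases i <;> fin_cases j <;> simp
      have hwmap' : (!![0, -1; 1, 0] : Matrix (Fin 2) (Fin 2) R).map (algebraMap R F)
          = !![0, -1; 1, 0] := by ext i j; fin_cases i <;> fin_cases j <;> simp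
      rw [hwmap, hwmap']
      have key : (!![(algebraMap R F s)⁻¹, 0; 0, algebraMap R F s] : Matrix (Fin 2) (Fin 2) F)
          = !![0, 1; -1, 0] * !![algebraMap R F s, 0; 0, (algebraMap R F s)⁻¹]
            * !![0, -1; 1, 0] := by
        simp only [Matrix.mul_fin_two]
        ext i j; fin_cases i <;> fin_cases j <;> simp
      rw [key]; noncomm_ring
end Cartan

section Quad

open Polynomial

variable {R : Type*} [CommRing R] [IsDomain R] (D : R)

local notation "SS" => AdjoinRoot (X ^ 2 - C D)

theorem monic2 : (X ^ 2 - C D).Monic := Polynomial.monic_X_pow_sub_C D two_ne_zero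

theorem tau_sq : (AdjoinRoot.root (X ^ 2 - C D)) ^ 2 = algebraMap R SS D := by
  have h := AdjoinRoot.mk_self (f := X ^ 2 - C D)
  rw [map_sub, map_pow, AdjoinRoot.mk_X, sub_eq_zero] at h
  rw [h, AdjoinRoot.algebraMap_eq, AdjoinRoot.mk_C]

noncomputable def coB : Module.Basis (Fin 2) R SS :=
  ((AdjoinRoot.powerBasis' (monic2 D)).basis).reindex
    (finCongr (by simp [Polynomial.natDegree_X_pow_sub_C]))

theorem coB_apply (i : Fin 2) : coB D i = AdjoinRoot.root (X ^ 2 - C D) ^ (i : ℕ) := by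
  rw [coB, Module.Basis.reindex_apply, PowerBasis.basis_eq_pow]
  simp [AdjoinRoot.powerBasis'_gen]

theorem coord_one_eq {x y v : R} {s : SS}
    (h : algebraMap R SS x + algebraMap R SS y * AdjoinRoot.root (X ^ 2 - C D)
      = algebraMap R SS v * s) : v ∣ y := by
  refine ⟨(coB D).repr s 1, ?_⟩
  have h0 : algebraMap R SS x = x • coB D 0 := by
    rw [coB_apply]; simp [← AdjoinRoot.algebraMap_eq, Algebra.algebraMap_eq_smul_one]
  have h1 : algebraMap R SS y * AdjoinRoot.root (X ^ 2 - C D) = y • coB D 1 := by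
    rw [coB_apply]; simp [Algebra.smul_def]
  have h2 : algebraMap R SS v * s = v • s := (Algebra.smul_def v s).symm
  have := congrArg (fun z => ((coB D).repr z) 1) h
  simp only [h0, h1, h2, map_add, map_smul, Module.Basis.repr_self, Finsupp.smul_apply,
    Finsupp.coe_add, Pi.add_apply, Finsupp.single_apply] at this
  simpa using this

theorem algebraMap_mem_nonZeroDivisors {z : R} (hz : z ≠ 0) :
    algebraMap R SS z ∈ nonZeroDivisors SS := by
  rw [mem_nonZeroDivisors_iff_right]
  intro s hs
  rw [mul_comm, ← Algebra.smul_def] at hs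
  have := congrArg (coB D).repr hs
  rw [map_smul, map_zero] at this
  have hrepr : (coB D).repr s = 0 := by
    ext a
    have := congrArg (fun F => F a) this
    simp only [Finsupp.smul_apply, smul_eq_mul, Finsupp.coe_zero, Pi.zero_apply] at this
    exact (mul_eq_zero.mp this).resolve_left hz
  have := congrArg (coB D).repr.symm hrepr
  simpa using this

end Quad

section IntClosed

/-- If `n/m` is a root of a monic quadratic over `S` and `S` is integrally closed
(in its total fraction ring), then `m` divides `n`. -/
theorem dvd_of_quadratic {S : Type*} [CommRing S] [IsIntegrallyClosed S]
    {n m q k : S} (hm : m ∈ nonZeroDivisors S)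
    (rel : n ^ 2 = q * n * m - k * m ^ 2) : ∃ s : S, n = m * s := by
  set L := FractionRing S
  set ι := algebraMap S L with hι
  have hminj : Function.Injective ι := IsFractionRing.injective S L
  obtain ⟨u, hu⟩ := IsLocalization.map_units L (⟨m, hm⟩ : nonZeroDivisors S)
  set x : L := ι n * ↑u⁻¹ with hx
  have relι : ι n ^ 2 = ι q * ι n * ↑u - ι k * ↑u ^ 2 := by
    rw [hu]
    simpa only [map_pow, map_mul, map_sub] using congrArg ι rel
  have hui : (↑u⁻¹ : L) * ↑u = 1 := Units.inv_mul u
  have hint : IsIntegral S x := by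
    refine ⟨Polynomial.X ^ 2 - Polynomial.C q * Polynomial.X + Polynomial.C k, ?_, ?_⟩
    · have : (Polynomial.X ^ 2 - Polynomial.C q * Polynomial.X + Polynomial.C k : Polynomial S)
          = Polynomial.X ^ 2 + (Polynomial.C (-q) * Polynomial.X + Polynomial.C k) := by
        rw [map_neg]; ring
      rw [this]
      exact Polynomial.monic_X_pow_add
        (lt_of_le_of_lt (Polynomial.degree_linear_le) (by norm_num))
    · simp only [Polynomial.eval₂_add, Polynomial.eval₂_sub, Polynomial.eval₂_pow,
        Polynomial.eval₂_mul, Polynomial.eval₂_X, Polynomial.eval₂_C]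
      rw [← hι]
      linear_combination (↑u⁻¹ : L) ^ 2 * relι +
        (ι q * ι n * ↑u⁻¹ - ι k * (1 + ↑u⁻¹ * ↑u)) * hui
  obtain ⟨y, hy⟩ := IsIntegrallyClosed.isIntegral_iff.mp hint
  refine ⟨y, hminj ?_⟩
  rw [map_mul, hy, hx]
  calc ι n = ι n * (↑u⁻¹ * ↑u) := by rw [hui, mul_one]
    _ = ι m * (ι n * ↑u⁻¹) := by rw [← hu]; ring

end IntClosed

section Core

open Polynomial

theorem core_isUnit {R : Type*} [CommRing R] [IsDomain R] [IsDiscreteValuationRing R]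
    (h2R : (2 : R) ≠ 0) (D : R) (hD : D ≠ 0)
    (hmax : IsIntegrallyClosed (AdjoinRoot (X ^ 2 - C D)))
    (a b c d r c₂ d₂ : R) (hr : r ≠ 0) (hc : c = c₂ * r) (hd : d = d₂ * r ^ 3)
    (hdisc : a ^ 2 * d ^ 2 - 3 * b ^ 2 * c ^ 2 + 4 * a * c ^ 3 + 4 * b ^ 3 * d
      - 6 * a * b * c * d = 4 * D) : IsUnit r := by
  subst hc hd
  by_contra hu
  obtain ⟨π, hirr⟩ := IsDiscreteValuationRing.exists_irreducible R
  have hπr : π ∣ r := by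
    rw [← Ideal.mem_span_singleton, ← hirr.maximalIdeal_eq]
    exact hu
  have hπ0 : π ≠ 0 := hirr.ne_zero
  have hπu : ¬IsUnit π := hirr.not_isUnit
  have hprime : Prime π := hirr.prime
  obtain ⟨r₀, rfl⟩ := hπr
  have hr₀ : r₀ ≠ 0 := fun h => hr (by simp [h])
  set S := AdjoinRoot (X ^ 2 - C D) with hS
  set A := algebraMap R S with hA
  -- π² does not divide D
  have hnsq : ¬ (π ^ 2 ∣ D) := by
    rintro ⟨D₂, hD₂⟩
    obtain ⟨s, hs⟩ := dvd_of_quadratic (S := S)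
      (algebraMap_mem_nonZeroDivisors D hπ0)
      (n := AdjoinRoot.root (X ^ 2 - C D)) (q := 0) (k := -(A D₂)) (by
        have hτ := tau_sq D
        have hDm := congrArg A hD₂
        simp only [map_mul, map_pow] at hDm
        linear_combination hτ + hDm)
    have : π ∣ (1 : R) := by
      apply coord_one_eq D (x := (0 : R)) (s := s)
      rw [map_zero, zero_add, map_one, one_mul]
      exact hs
    exact hπu (isUnit_of_dvd_one this)
  by_cases hπ2 : π ∣ 2
  · -- residue characteristic 2 : use the element (Q + 2τ)/(2π)
    set Q : R := b * (c₂ * (π * r₀)) - a * (d₂ * (π * r₀) ^ 3) with hQ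
    set K : R := r₀ ^ 2 * ((b ^ 2 - a * (c₂ * (π * r₀))) * (c₂ ^ 2 - b * d₂ * (π * r₀))) with hK
    have hQ2 : Q ^ 2 = 4 * D + 4 * π ^ 2 * K := by
      rw [hQ, hK]; linear_combination hdisc
    have hπQ : π ∣ Q := by
      apply hprime.dvd_of_dvd_pow (n := 2)
      obtain ⟨t, ht⟩ := hπ2
      refine ⟨π * t ^ 2 * D + π ^ 3 * t ^ 2 * K, ?_⟩
      have h4 : (4 : R) = π ^ 2 * t ^ 2 := by rw [show (4:R) = 2 * 2 by norm_num, ht]; ring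
      rw [hQ2, h4]; ring
    obtain ⟨q₀, hq₀⟩ := hπQ
    rw [hq₀] at hQ2
    have h2π0 : (2 : R) * π ≠ 0 := mul_ne_zero h2R hπ0
    obtain ⟨s, hs⟩ := dvd_of_quadratic (S := S) (algebraMap_mem_nonZeroDivisors D h2π0)
      (n := A (π * q₀) + 2 * AdjoinRoot.root (X ^ 2 - C D)) (q := A q₀) (k := A K) (by
        have hτ := tau_sq D
        have eS := congrArg A hQ2
        simp only [map_mul, map_add, map_pow, map_ofNat] at eS ⊢
        linear_combination (4 : S) * hτ - eS)
    have hs' : A (π * q₀) + A 2 * AdjoinRoot.root (X ^ 2 - C D) = A (2 * π) * s := by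
      rw [map_ofNat]; exact hs
    obtain ⟨w, hw⟩ := coord_one_eq D hs'
    have h0 : (2 : R) * (1 - π * w) = 0 := by linear_combination hw
    rcases mul_eq_zero.mp h0 with h | h
    · exact h2R h
    · exact hπu (IsUnit.of_mul_eq_one (a := π) w (by linear_combination -h))
  · -- residue characteristic ≠ 2 : valuation of the discriminant
    have h4 : ¬ (π ∣ 4) := fun hd4 => hπ2 (by
      have : (4:R) = 2 * 2 := by norm_num
      rw [this] at hd4
      exact (hprime.dvd_mul.mp hd4).elim id id)
    have h4D : 4 * D = π ^ 2 *
        (a ^ 2 * d₂ ^ 2 * π ^ 4 * r₀ ^ 6 - 3 * b ^ 2 * c₂ ^ 2 * r₀ ^ 2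
          + 4 * a * c₂ ^ 3 * π * r₀ ^ 3 + 4 * b ^ 3 * d₂ * π * r₀ ^ 3
          - 6 * a * b * c₂ * d₂ * π ^ 2 * r₀ ^ 4) := by
      linear_combination -hdisc
    have hπD : π ∣ D := by
      have : π ∣ 4 * D := ⟨π * (a ^ 2 * d₂ ^ 2 * π ^ 4 * r₀ ^ 6 - 3 * b ^ 2 * c₂ ^ 2 * r₀ ^ 2
          + 4 * a * c₂ ^ 3 * π * r₀ ^ 3 + 4 * b ^ 3 * d₂ * π * r₀ ^ 3
          - 6 * a * b * c₂ * d₂ * π ^ 2 * r₀ ^ 4), by rw [h4D]; ring⟩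
      exact (hprime.dvd_mul.mp this).resolve_left (fun h => h4 h)
    obtain ⟨D₁, rfl⟩ := hπD
    apply hnsq
    have hcan : 4 * D₁ = π * (a ^ 2 * d₂ ^ 2 * π ^ 4 * r₀ ^ 6 - 3 * b ^ 2 * c₂ ^ 2 * r₀ ^ 2
          + 4 * a * c₂ ^ 3 * π * r₀ ^ 3 + 4 * b ^ 3 * d₂ * π * r₀ ^ 3
          - 6 * a * b * c₂ * d₂ * π ^ 2 * r₀ ^ 4) := by
      have := h4D
      rw [show π ^ 2 = π * π by ring] at this
      apply mul_left_cancel₀ hπ0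
      linear_combination this
    have hπD₁ : π ∣ D₁ := by
      have : π ∣ 4 * D₁ := ⟨_, hcan⟩
      exact (hprime.dvd_mul.mp this).resolve_left (fun h => h4 h)
    obtain ⟨D₀, rfl⟩ := hπD₁
    exact ⟨D₀, by ring⟩

end Core

open Polynomial in
theorem slEquiv_of_fractionField_slEquiv' {R : Type*} [CommRing R] [IsDomain R]
    [IsDiscreteValuationRing R]
    (h2 : (2 : FractionRing R) ≠ 0) (h3 : (3 : FractionRing R) ≠ 0)
    (D : R) (hD : D ≠ 0)
    (hmax : IsIntegrallyClosed (AdjoinRoot (X ^ 2 - C D)))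
    (f g : BinaryCubic R)
    (hf : BinaryCubic.disc f = 4 * D) (hg : BinaryCubic.disc g = 4 * D)
    (hFG : BinaryCubic.SLEquiv (f.map (algebraMap R (FractionRing R)))
      (g.map (algebraMap R (FractionRing R)))) :
    BinaryCubic.SLEquiv f g := by
  obtain ⟨M, hMdet, hMact⟩ := hFG
  obtain ⟨P, B, r, hr, hP, hB, hMeq⟩ := cartan (R := R) M hMdet
  set φ := algebraMap R (FractionRing R) with hφ
  have hinj : Function.Injective φ := IsFractionRing.injective R (FractionRing R)
  have h2R : (2 : R) ≠ 0 := fun h => h2 (by rw [← map_ofNat φ 2, h, map_zero])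
  have hu0 : φ r ≠ 0 := fun h => hr (hinj (h.trans (map_zero φ).symm))
  set Dmat : Matrix (Fin 2) (Fin 2) (FractionRing R) := !![φ r, 0; 0, (φ r)⁻¹] with hDmat
  set f1 := BinaryCubic.act P f with hf1
  set g1 := BinaryCubic.act (inv2 B) g with hg1
  have key : BinaryCubic.act Dmat (f1.map φ) = g1.map φ := by
    have hact := hMact
    rw [hMeq, BinaryCubic.act_mul, BinaryCubic.act_mul, ← BinaryCubic.map_act] at hact
    have h' := congrArg (BinaryCubic.act ((inv2 B).map φ)) hact
    rw [← BinaryCubic.act_mul, ← Matrix.map_mul, mul_inv2 hB,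
      Matrix.map_one φ (map_zero φ) (map_one φ), BinaryCubic.act_one,
      ← BinaryCubic.map_act] at h'
    exact h'
  have ec := congrArg BinaryCubic.c key
  have ed := congrArg BinaryCubic.d key
  simp [BinaryCubic.act, BinaryCubic.map, hDmat] at ec ed
  field_simp at ec ed
  have hC1 : f1.c = g1.c * r := by
    apply hinj
    rw [map_mul]
    refine mul_left_cancel₀ hu0 ?_
    linear_combination φ r * ec
  have hD1 : f1.d = g1.d * r ^ 3 := by
    apply hinj
    rw [map_mul, map_pow]
    refine mul_left_cancel₀ (pow_ne_zero 3 hu0) ?_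
    first
    | linear_combination ed
    | linear_combination φ r ^ 3 * ed
    | linear_combination φ r ^ 2 * ed
    | linear_combination φ r * ed
    | linear_combination -ed
  have hdiscf1 : BinaryCubic.disc f1 = 4 * D := by
    rw [hf1, BinaryCubic.disc_act, hP, one_pow, one_mul, hf]
  have hru : IsUnit r := by
    apply core_isUnit h2R D hD hmax f1.a f1.b f1.c f1.d r g1.c g1.d hr hC1 hD1
    simpa [BinaryCubic.disc] using hdiscf1
  obtain ⟨ru, hru⟩ := hru
  have hrinv : (φ r)⁻¹ = φ ((ru⁻¹ : Rˣ) : R) := by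
    apply inv_eq_of_mul_eq_one_right
    rw [← map_mul, ← hru, Units.mul_inv, map_one]
  set Dr : Matrix (Fin 2) (Fin 2) R := !![r, 0; 0, ((ru⁻¹ : Rˣ) : R)] with hDr
  have hDrmap : Dr.map φ = Dmat := by
    ext i j
    fin_cases i <;> fin_cases j <;> simp [hDr, hDmat, hrinv]
  have hDrdet : Dr.det = 1 := by
    rw [hDr, Matrix.det_fin_two_of, ← hru]
    simp [Units.mul_inv]
  refine ⟨P * Dr * B, ?_, ?_⟩
  · rw [Matrix.det_mul, Matrix.det_mul, hP, hB, hDrdet]; ring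
  · apply BinaryCubic.map_injective hinj
    rw [BinaryCubic.map_act, Matrix.map_mul, Matrix.map_mul, hDrmap, ← hMeq]
    exact hMact


open Polynomial in
/-- Let `R` be a DVR whose fraction field has characteristic ≠ 2, 3, let `D ∈ R`
be nonzero, `S = R[t]/(t² − D)`, and suppose `S` is the maximal order in `K = F[t]/(t² − D)`
(equivalently, `S` is integrally closed, `K` being its total ring of fractions). If two binary
cubic forms over `R` of discriminant `4D` become `SL₂(F)`-equivalent over the fraction field
`F`, then they are already `SL₂(R)`-equivalent. -/
theorem slEquiv_of_fractionField_slEquiv {R : Type*} [CommRing R] [IsDomain R]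
    [IsDiscreteValuationRing R]
    (h2 : (2 : FractionRing R) ≠ 0) (h3 : (3 : FractionRing R) ≠ 0)
    (D : R) (hD : D ≠ 0)
    (hmax : IsIntegrallyClosed (AdjoinRoot (X ^ 2 - C D)))
    (f g : BinaryCubic R)
    (hf : BinaryCubic.disc f = 4 * D) (hg : BinaryCubic.disc g = 4 * D)
    (hFG : BinaryCubic.SLEquiv (f.map (algebraMap R (FractionRing R)))
      (g.map (algebraMap R (FractionRing R)))) :
    BinaryCubic.SLEquiv f g :=
  slEquiv_of_fractionField_slEquiv' h2 h3 D hD hmax f g hf hg hFG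
end

section
/- Let F be a field of characteristic different from 2 and 3, let D ∈ F*, let K = F[t]/(t² − D) with τ the image of t, and let δ = u + vτ ∈ K with u, v ∈ F. Then: (i) for all x, y ∈ F, (1/(2D))·Tr_{K/F}(δ·τ·(x + τy)³) = v·x³ + 3u·x²y + 3vD·xy² + uD·y³; (ii) the binary cubic form f_δ with coefficient quadruple (v, u, vD, uD) has discriminant Disc(f_δ) = 4D·N_{K/F}(δ)²; and (iii) the scaled Hessian of f_δ is h_{f_δ}(x,y) = N_{K/F}(δ)·(x² − D·y²). In particular, if N_{K/F}(δ) = 1 then Disc(f_δ) = 4D and h_{f_δ}(x,y) = N_{K/F}(x + τy). -/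
open Polynomial AdjoinRoot in
/-- Trace and norm of `p + q·τ` in `F[t]/(t² − D)`. -/
theorem aux_trace_norm {F : Type*} [Field F] (D p q : F) :
    Algebra.trace F (AdjoinRoot (X ^ 2 - C D))
        (algebraMap F _ p + algebraMap F _ q * root (X ^ 2 - C D)) = 2 * p ∧
    Algebra.norm F
        (algebraMap F (AdjoinRoot (X ^ 2 - C D)) p +
          algebraMap F _ q * root (X ^ 2 - C D)) = p ^ 2 - D * q ^ 2 := by
  have hm : (X ^ 2 - C D).Monic := monic_X_pow_sub_C D two_ne_zero
  set K := AdjoinRoot (X ^ 2 - C D) with hK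
  set τ : K := root (X ^ 2 - C D) with hτdef
  have hτ : τ ^ 2 = algebraMap F K D := by
    have h0 := mk_self (f := X ^ 2 - C D)
    rw [map_sub, map_pow, mk_X, sub_eq_zero] at h0
    rw [hτdef, h0, AdjoinRoot.algebraMap_eq]
    rfl
  let pb := AdjoinRoot.powerBasis' hm
  have hdim : pb.dim = 2 := natDegree_X_pow_sub_C
  let b : Module.Basis (Fin 2) F K := pb.basis.reindex (finCongr hdim)
  have hb0 : b 0 = 1 := by
    simp [b, Module.Basis.reindex_apply, pb.basis_eq_pow]
  have hb1 : b 1 = τ := by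
    rw [show b 1 = pb.basis ((finCongr hdim).symm 1) from Module.Basis.reindex_apply ..,
      pb.basis_eq_pow]
    norm_num
    exact hτdef.symm
  have hrepr : ∀ r s : F, b.repr (algebraMap F K r + algebraMap F K s * τ)
      = Finsupp.single 0 r + Finsupp.single 1 s := by
    intro r s
    have h : algebraMap F K r + algebraMap F K s * τ = r • b 0 + s • b 1 := by
      rw [hb0, hb1, Algebra.smul_def, Algebra.smul_def, mul_one]
    rw [h, map_add, map_smul, map_smul, b.repr_self, b.repr_self,
      Finsupp.smul_single, Finsupp.smul_single, smul_eq_mul, smul_eq_mul, mul_one, mul_one]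
  have hM : Algebra.leftMulMatrix b (algebraMap F K p + algebraMap F K q * τ)
      = !![p, D * q; q, p] := by
    have hz0 : (algebraMap F K p + algebraMap F K q * τ) * b 0
        = algebraMap F K p + algebraMap F K q * τ := by rw [hb0, mul_one]
    have hz1 : (algebraMap F K p + algebraMap F K q * τ) * b 1
        = algebraMap F K (D * q) + algebraMap F K p * τ := by
      rw [hb1, map_mul]
      linear_combination (algebraMap F K q) * hτ
    ext i j
    rw [Algebra.leftMulMatrix_eq_repr_mul]
    fin_cases i <;> fin_cases j <;>
      simp [hz0, hz1, hrepr, Finsupp.single_apply, -map_mul, -map_add, -map_pow,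
        -_root_.map_mul, -_root_.map_add]
  constructor
  · rw [Algebra.trace_eq_matrix_trace b, hM, Matrix.trace_fin_two_of]; ring
  · rw [Algebra.norm_eq_matrix_det b, hM, Matrix.det_fin_two_of]; ring

open Polynomial in
/-- Let `F` be a field of characteristic ≠ 2, 3, `D ∈ F*`, `K = F[t]/(t² − D)`
with `τ` the image of `t`, and `δ = u + vτ`. Then (i) `(1/2D)·Tr(δτ(x+τy)³)` is the binary
cubic form with coefficients `(v, u, vD, uD)`; (ii) that form has discriminant `4D·N(δ)²`;
(iii) its scaled Hessian is `N(δ)(x² − Dy²)`; and in particular if `N(δ) = 1` it has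
discriminant `4D` and scaled Hessian `N(x + τy)`. -/
theorem trace_form_disc_hess {F : Type*} [Field F]
    (h2 : (2 : F) ≠ 0) (h3 : (3 : F) ≠ 0) (D : F) (hD : D ≠ 0) (u v : F) :
    let K := AdjoinRoot (X ^ 2 - C D)
    let τ : K := AdjoinRoot.root (X ^ 2 - C D)
    let δ : K := algebraMap F K u + algebraMap F K v * τ
    let fδ : BinaryCubic F := ⟨v, u, v * D, u * D⟩
    (∀ x y : F,
      (2 * D)⁻¹ * Algebra.trace F K (δ * τ * (algebraMap F K x + algebraMap F K y * τ) ^ 3)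
        = fδ.eval x y) ∧
    BinaryCubic.disc fδ = 4 * D * Algebra.norm F δ ^ 2 ∧
    (∀ x y : F, BinaryCubic.hess fδ x y = Algebra.norm F δ * (x ^ 2 - D * y ^ 2)) ∧
    (Algebra.norm F δ = 1 →
      BinaryCubic.disc fδ = 4 * D ∧
      ∀ x y : F, BinaryCubic.hess fδ x y
        = Algebra.norm F (algebraMap F K x + algebraMap F K y * τ)) := by
  intro K τ δ fδ
  have hτ : τ ^ 2 = algebraMap F K D := by
    have h0 := AdjoinRoot.mk_self (f := X ^ 2 - C D)
    rw [map_sub, map_pow, AdjoinRoot.mk_X, sub_eq_zero] at h0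
    rw [show τ = AdjoinRoot.root (X ^ 2 - C D) from rfl, h0, AdjoinRoot.algebraMap_eq]
    rfl
  have htr : ∀ p q : F,
      Algebra.trace F K (algebraMap F K p + algebraMap F K q * τ) = 2 * p :=
    fun p q => (aux_trace_norm D p q).1
  have hnm : ∀ p q : F,
      Algebra.norm F (algebraMap F K p + algebraMap F K q * τ) = p ^ 2 - D * q ^ 2 :=
    fun p q => (aux_trace_norm D p q).2
  have hnδ : Algebra.norm F δ = u ^ 2 - D * v ^ 2 := hnm u v
  have hdisc : BinaryCubic.disc fδ = 4 * D * Algebra.norm F δ ^ 2 := by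
    rw [hnδ]
    show BinaryCubic.disc ⟨v, u, v * D, u * D⟩ = _
    simp only [BinaryCubic.disc]
    ring
  have hhess : ∀ x y : F, BinaryCubic.hess fδ x y = Algebra.norm F δ * (x ^ 2 - D * y ^ 2) := by
    intro x y
    rw [hnδ]
    show BinaryCubic.hess ⟨v, u, v * D, u * D⟩ x y = _
    simp only [BinaryCubic.hess]
    ring
  refine ⟨?_, hdisc, hhess, ?_⟩
  · intro x y
    have heval : fδ.eval x y
        = v * x ^ 3 + 3 * u * x ^ 2 * y + 3 * (v * D) * x * y ^ 2 + u * D * y ^ 3 := rfl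
    have h3c : (algebraMap F K x + algebraMap F K y * τ) ^ 3
        = algebraMap F K (x ^ 3 + 3 * D * x * y ^ 2)
          + algebraMap F K (3 * x ^ 2 * y + D * y ^ 3) * τ := by
      simp only [map_add, map_mul, map_pow, map_ofNat]
      linear_combination (3 * algebraMap F K x * algebraMap F K y ^ 2
        + algebraMap F K y ^ 3 * τ) * hτ
    have h5 : δ * τ * (algebraMap F K x + algebraMap F K y * τ) ^ 3
        = algebraMap F K (D * fδ.eval x y)
          + algebraMap F K (u * x ^ 3 + 3 * v * D * x ^ 2 * y + 3 * u * D * x * y ^ 2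
              + v * D ^ 2 * y ^ 3) * τ := by
      rw [h3c, heval]
      show (algebraMap F K u + algebraMap F K v * τ) * τ * _ = _
      simp only [map_add, map_mul, map_pow, map_ofNat]
      linear_combination (algebraMap F K u * (3 * algebraMap F K x ^ 2 * algebraMap F K y
          + algebraMap F K D * algebraMap F K y ^ 3)
        + algebraMap F K v * (algebraMap F K x ^ 3
          + 3 * algebraMap F K D * algebraMap F K x * algebraMap F K y ^ 2)
        + algebraMap F K v * (3 * algebraMap F K x ^ 2 * algebraMap F K y
          + algebraMap F K D * algebraMap F K y ^ 3) * τ) * hτ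
    rw [h5, htr]
    field_simp
  · intro hN1
    refine ⟨by rw [hdisc, hN1]; ring, fun x y => ?_⟩
    rw [hhess x y, hN1, hnm x y]
    ring
end

section
/- Let F be a field of characteristic different from 2 and 3, let D ∈ F*, let f be a binary cubic form over F with Disc(f) = 4D, and let a, b ∈ F. Suppose (x₀, y₀, z₀) ∈ F³ satisfies z₀ ≠ 0 and f(x₀, y₀) + a·h_f(x₀, y₀)·z₀ + b·z₀³ = 0. Then the pair X = h_f(x₀, y₀)/z₀² and Y = g_f(x₀, y₀)/(6·z₀³) satisfies the Weierstrass equation Y² = X³ + D·(a·X + b)². -/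
open BinaryCubic in
theorem syzygy {R : Type*} [CommRing R] (f : BinaryCubic R) (x y : R) :
    gcov f x y ^ 2 = 36 * hess f x y ^ 3 + 9 * disc f * f.eval x y ^ 2 := by
  simp only [gcov, hess, eval, disc]; ring

open BinaryCubic in
/-- Let `F` be a field of characteristic ≠ 2, 3, `D ∈ F*`, `f` a binary cubic form
over `F` with `Disc f = 4D`, and `a, b ∈ F`. If `(x₀, y₀, z₀) ∈ F³` with `z₀ ≠ 0` satisfies
`f(x₀,y₀) + a·h_f(x₀,y₀)·z₀ + b·z₀³ = 0`, then `X = h_f(x₀,y₀)/z₀²`, `Y = g_f(x₀,y₀)/(6z₀³)`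
satisfy `Y² = X³ + D(aX + b)²`. -/
theorem covering_point_on_weierstrass {F : Type*} [Field F]
    (h2 : (2 : F) ≠ 0) (h3 : (3 : F) ≠ 0) (D : F) (hD : D ≠ 0)
    (f : BinaryCubic F) (hf : disc f = 4 * D) (a b : F)
    (x₀ y₀ z₀ : F) (hz : z₀ ≠ 0)
    (hsol : f.eval x₀ y₀ + a * hess f x₀ y₀ * z₀ + b * z₀ ^ 3 = 0) :
    (gcov f x₀ y₀ / (6 * z₀ ^ 3)) ^ 2
      = (hess f x₀ y₀ / z₀ ^ 2) ^ 3 + D * (a * (hess f x₀ y₀ / z₀ ^ 2) + b) ^ 2 := by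
  have hfe : f.eval x₀ y₀ = -(a * hess f x₀ y₀ * z₀ + b * z₀ ^ 3) := by
    linear_combination hsol
  have key : gcov f x₀ y₀ ^ 2
      = 36 * hess f x₀ y₀ ^ 3 + 36 * D * (a * hess f x₀ y₀ * z₀ + b * z₀ ^ 3) ^ 2 := by
    rw [syzygy f x₀ y₀, hf, hfe]; ring
  have h6 : (6 : F) ≠ 0 := by
    intro h; apply h2
    have : (2 : F) * 3 = 0 := by linear_combination h
    exact (mul_eq_zero.mp this).resolve_right h3
  field_simp
  linear_combination key
end

section
/- Let F be a field of characteristic different from 2 and 3, let a, b, s ∈ F, set D = s², and let W be the Weierstrass curve y² = x³ + Da²·x² + 2Dab·x + Db² (i.e., the curve y² = x³ + D(ax + b)²). Assume the discriminant of W is nonzero. Then (0, bs) is a point on W, and in the group of points of W over F the point P = (0, bs) has order exactly 3 (in particular 3·P = 0 and P ≠ 0). -/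
open WeierstrassCurve.Affine WeierstrassCurve.Affine.Point

open Classical in
/-- Let `F` be a field of characteristic ≠ 2, 3, let `a, b, s ∈ F`, `D = s²`, and
let `W : y² = x³ + D(ax + b)²` be the corresponding Weierstrass curve, assumed to have nonzero
discriminant. Then `(0, bs)` is a (nonsingular) point of `W`, and in the group of points of `W`
over `F` it has order exactly `3`. -/
theorem threeTorsion_point_on_weierstrass {F : Type*} [Field F]
    (h2 : (2 : F) ≠ 0) (h3 : (3 : F) ≠ 0) (a b s : F) :
    let D := s ^ 2
    let W : WeierstrassCurve.Affine F :=
      { a₁ := 0, a₂ := D * a ^ 2, a₃ := 0, a₄ := 2 * D * a * b, a₆ := D * b ^ 2 }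
    W.Δ ≠ 0 →
      W.Equation 0 (b * s) ∧ ∃ hP : W.Nonsingular 0 (b * s),
        addOrderOf (WeierstrassCurve.Affine.Point.some _ _ hP) = 3 := by
  intro D W hΔ
  have hΔfact : W.Δ = 16 * s ^ 4 * b ^ 3 * (4 * s ^ 2 * a ^ 3 - 27 * b) := by
    simp only [WeierstrassCurve.Δ, WeierstrassCurve.b₂, WeierstrassCurve.b₄,
      WeierstrassCurve.b₆, WeierstrassCurve.b₈, W, D]
    ring
  have hs : s ≠ 0 := fun h => hΔ (by rw [hΔfact, h]; ring)
  have hb : b ≠ 0 := fun h => hΔ (by rw [hΔfact, h]; ring)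
  have hbs : b * s ≠ 0 := mul_ne_zero hb hs
  have heq : W.Equation 0 (b * s) := by
    rw [equation_iff]
    show (b * s) ^ 2 + 0 * 0 * (b * s) + 0 * (b * s)
        = 0 ^ 3 + D * a ^ 2 * 0 ^ 2 + 2 * D * a * b * 0 + D * b ^ 2
    simp only [D]; ring
  have hP : W.Nonsingular 0 (b * s) := (W.equation_iff_nonsingular_of_Δ_ne_zero hΔ).mp heq
  refine ⟨heq, hP, ?_⟩
  have hnegY : W.negY 0 (b * s) = -(b * s) := by
    show -(b * s) - 0 * 0 - 0 = -(b * s); ring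
  have hy : (b * s) ≠ W.negY 0 (b * s) := by
    rw [hnegY]
    intro h
    exact mul_ne_zero h2 hbs (by linear_combination h)
  have hslope : W.slope 0 0 (b * s) (b * s) = s * a := by
    rw [slope_of_Y_ne rfl hy, hnegY]
    show (3 * 0 ^ 2 + 2 * (D * a ^ 2) * 0 + 2 * D * a * b - 0 * (b * s))
        / (b * s - -(b * s)) = s * a
    have hden : b * s - -(b * s) ≠ 0 := by
      intro h
      exact mul_ne_zero h2 hbs (by linear_combination h)
    rw [show (3 * 0 ^ 2 + 2 * (D * a ^ 2) * 0 + 2 * D * a * b - 0 * (b * s))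
        = (s * a) * (b * s - -(b * s)) by simp only [D]; ring,
      mul_div_assoc, div_self hden, mul_one]
  have hx2 : W.addX 0 0 (s * a) = 0 := by
    show (s * a) ^ 2 + 0 * (s * a) - D * a ^ 2 - 0 - 0 = 0
    simp only [D]; ring
  have hy2 : W.negAddY 0 0 (b * s) (s * a) = b * s := by
    rw [negAddY, hx2]; ring
  set P := WeierstrassCurve.Affine.Point.some _ _ hP with hPdef
  have key : ∀ {x y : F} (h : W.Nonsingular x y), x = 0 → y = b * s →
      WeierstrassCurve.Affine.Point.some _ _ h = P := by
    rintro x y h rfl rfl; rfl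
  have h2P : P + P = -P := by
    rw [hPdef, add_of_Y_ne' hy]
    exact neg_inj.mpr (key _ (by rw [hslope]; exact hx2) (by rw [hslope]; exact hy2))
  have h3P : (3 : ℕ) • P = 0 := by
    have : (3 : ℕ) • P = P + P + P := by abel
    rw [this, h2P, neg_add_cancel]
  haveI : Fact (Nat.Prime 3) := ⟨by norm_num⟩
  exact addOrderOf_eq_prime h3P (some_ne_zero hP)
end

section
/- Let p > 3 be a prime and let D ∈ ℚ_p* have odd p-adic valuation, so that K = ℚ_p[t]/(t² − D) is a ramified quadratic field extension of ℚ_p. If δ ∈ K* is such that N_{K/ℚ_p}(δ) is a cube in ℚ_p*, then δ is a cube in K*. Equivalently, the kernel of the map K*/(K*)³ → ℚ_p*/(ℚ_p*)³ induced by the norm is trivial. -/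
open Polynomial

namespace CubeRamifiedAux

variable {p : ℕ} [Fact p.Prime]

lemma norm_natCast_eq_one {n : ℕ} (hn : ¬ (p ∣ n)) : ‖(n : ℚ_[p])‖ = 1 := by
  have h1 : ‖((n : ℤ) : ℚ_[p])‖ ≤ 1 := Padic.norm_int_le_one _
  have h2 : ¬ ‖((n : ℤ) : ℚ_[p])‖ < 1 := by
    rw [Padic.norm_intCast_lt_one_iff]
    exact_mod_cast hn
  push_cast at h1 h2
  linarith [not_lt.mp h2]

lemma dichotomy (hp : 3 < p) {D s t : ℚ_[p]} (hD : D ≠ 0) (hodd : Odd D.valuation)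
    (h : s ^ 2 - D * t ^ 2 = 1) :
    ‖s‖ ≤ 1 ∧ (‖s - 1‖ < 1 ∨ ‖s + 1‖ < 1) := by
  have hp1 : (1 : ℝ) < p := by exact_mod_cast (Fact.out : p.Prime).one_lt
  rcases eq_or_ne t 0 with rfl | ht
  · have hs2 : (s - 1) * (s + 1) = 0 := by linear_combination h
    rcases mul_eq_zero.mp hs2 with h1 | h1
    · have hs : s = 1 := sub_eq_zero.mp h1
      subst hs
      exact ⟨by simp, Or.inl (by simp)⟩
    · have hs : s = -1 := eq_neg_of_add_eq_zero_left h1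
      subst hs
      exact ⟨by simp, Or.inr (by simp)⟩
  · have ht2 : t ^ 2 ≠ 0 := pow_ne_zero _ ht
    have hDt : D * t ^ 2 ≠ 0 := mul_ne_zero hD ht2
    have hvDt : Odd ((D * t ^ 2).valuation) := by
      rw [Padic.valuation_mul hD ht2]
      have h2 : (t ^ 2).valuation = t.valuation + t.valuation := by
        rw [pow_two, Padic.valuation_mul ht ht]
      rw [h2]
      rcases hodd with ⟨k, hk⟩
      exact ⟨k + t.valuation, by rw [hk]; ring⟩
    have hinj : Function.Injective (fun n : ℤ => (p : ℝ) ^ n) :=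
      zpow_right_injective₀ (by linarith) (by linarith)
    have hne1 : ‖D * t ^ 2‖ ≠ 1 := by
      rw [Padic.norm_eq_zpow_neg_valuation hDt]
      intro hcon
      have h0 : -(D * t ^ 2).valuation = 0 := by
        apply hinj
        simpa using hcon
      rcases hvDt with ⟨k, hk⟩
      omega
    have hne : ‖s ^ 2‖ ≠ ‖D * t ^ 2‖ := by
      rcases eq_or_ne s 0 with rfl | hs
      · rw [zero_pow (by norm_num : (2:ℕ) ≠ 0), norm_zero]
        exact Ne.symm (norm_ne_zero_iff.mpr hDt)
      · rw [Padic.norm_eq_zpow_neg_valuation (pow_ne_zero 2 hs), Padic.norm_eq_zpow_neg_valuation hDt]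
        intro hcon
        have h0 := hinj hcon
        have hv2 : (s ^ 2).valuation = s.valuation + s.valuation := by
          rw [pow_two, Padic.valuation_mul hs hs]
        rcases hvDt with ⟨k, hk⟩
        rw [hv2] at h0
        omega
    have hmax : max ‖s ^ 2‖ ‖D * t ^ 2‖ = 1 := by
      have heq : s ^ 2 + -(D * t ^ 2) = 1 := by linear_combination h
      have := Padic.add_eq_max_of_ne (q := s ^ 2) (r := -(D * t ^ 2))
        (by simpa using hne)
      rw [heq] at this
      simpa using this.symm
    have hB : ‖D * t ^ 2‖ < 1 :=
      lt_of_le_of_ne (le_trans (le_max_right _ _) hmax.le) hne1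
    have hA : ‖s ^ 2‖ = 1 := by
      rcases max_choice ‖s ^ 2‖ ‖D * t ^ 2‖ with h1 | h1
      · rw [h1] at hmax; exact hmax
      · rw [h1] at hmax; rw [hmax] at hB; linarith
    have hs1 : ‖s‖ = 1 := by
      rw [norm_pow] at hA
      nlinarith [norm_nonneg s]
    refine ⟨hs1.le, ?_⟩
    have hprod : ‖s - 1‖ * ‖s + 1‖ < 1 := by
      rw [← norm_mul]
      have heq : (s - 1) * (s + 1) = D * t ^ 2 := by linear_combination h
      rw [heq]; exact hB
    rcases lt_or_ge ‖s - 1‖ 1 with h1 | h1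
    · exact Or.inl h1
    · right
      calc ‖s + 1‖ = 1 * ‖s + 1‖ := by ring
        _ ≤ ‖s - 1‖ * ‖s + 1‖ := mul_le_mul_of_nonneg_right h1 (norm_nonneg _)
        _ < 1 := hprod

lemma cheb_root (hp : 3 < p) {s : ℚ_[p]} (hs : ‖s‖ ≤ 1) {ε : ℚ_[p]}
    (hε : ε = 1 ∨ ε = -1) (hclose : ‖s - ε‖ < 1) :
    ∃ e : ℚ_[p], 4 * e ^ 3 - 3 * e = s ∧ ‖e - ε‖ < 1 ∧ ‖e‖ ≤ 1 := by
  have hεn : ‖ε‖ ≤ 1 := by rcases hε with rfl | rfl <;> simp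
  set s' : ℤ_[p] := ⟨s, hs⟩ with hs'
  set ε' : ℤ_[p] := ⟨ε, hεn⟩ with hε'
  have hε2 : ε' ^ 2 = 1 := by
    apply Subtype.ext
    rw [PadicInt.coe_pow]
    rcases hε with h | h <;> simp [hε', h]
  set F : Polynomial ℤ_[p] := C 4 * X ^ 3 - C 3 * X - C s' with hF
  have hF1 : F.eval ε' = ε' - s' := by
    simp only [hF, eval_sub, eval_mul, eval_C, eval_X, eval_pow]
    have : ε' ^ 3 = ε' := by rw [pow_succ, hε2, one_mul]
    rw [this]; ring
  have hFd : F.derivative.eval ε' = 9 := by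
    simp [hF, hε2]
    norm_num
  have h9 : ‖(9 : ℤ_[p])‖ = 1 := by
    have h1 : ‖((9 : ℤ) : ℤ_[p])‖ ≤ 1 := PadicInt.norm_le_one _
    have h2 : ¬ ‖((9 : ℤ) : ℤ_[p])‖ < 1 := by
      rw [PadicInt.norm_int_lt_one_iff_dvd]
      intro hdvd
      have h3 : (p : ℤ) ∣ 3 * 3 := by simpa using hdvd
      have hpp : p.Prime := Fact.out
      rcases (Int.Prime.dvd_mul' (by exact_mod_cast hpp) h3) with h4 | h4 <;>
      · have h5 : (p : ℤ) ≤ 3 := Int.le_of_dvd (by norm_num) h4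
        have h6 : (3 : ℤ) < (p : ℤ) := by exact_mod_cast hp
        omega
    push_cast at h1 h2
    linarith [not_lt.mp h2]
  have hnorm : ‖F.eval ε'‖ < ‖F.derivative.eval ε'‖ ^ 2 := by
    rw [hF1, hFd, h9, one_pow]
    have : ‖ε' - s'‖ = ‖s - ε‖ := by
      rw [← PadicInt.padic_norm_e_of_padicInt, PadicInt.coe_sub]
      simp only [hs', hε']
      rw [← norm_neg]
      congr 1
      ring
    rw [this]; exact hclose
  obtain ⟨z, hz, hzdist, _, _⟩ := hensels_lemma hnorm
  simp only [Polynomial.coe_aeval_eq_eval] at hz hzdist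
  refine ⟨(z : ℚ_[p]), ?_, ?_, PadicInt.norm_le_one z⟩
  · have h0 : (4 : ℤ_[p]) * z ^ 3 - 3 * z = s' := by
      have h' := hz
      simp only [hF, eval_sub, eval_mul, eval_C, eval_X, eval_pow] at h'
      exact sub_eq_zero.mp (by linear_combination h')
    have hcast := congrArg (fun x : ℤ_[p] => (x : ℚ_[p])) h0
    push_cast at hcast
    have h4 : ((4 : ℤ_[p]) : ℚ_[p]) = 4 := PadicInt.coe_natCast 4
    have h3 : ((3 : ℤ_[p]) : ℚ_[p]) = 3 := PadicInt.coe_natCast 3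
    simpa [hs', h4, h3] using hcast
  · rw [hFd, h9] at hzdist
    have : ‖(z : ℚ_[p]) - ε‖ = ‖z - ε'‖ := by
      rw [← PadicInt.padic_norm_e_of_padicInt, PadicInt.coe_sub]
    rw [this]; exact hzdist

lemma solve_cheb (hp : 3 < p) {D s t : ℚ_[p]} (hD : D ≠ 0) (hodd : Odd D.valuation)
    (h : s ^ 2 - D * t ^ 2 = 1) :
    ∃ e f : ℚ_[p], e ^ 3 + 3 * D * e * f ^ 2 = s ∧ 3 * e ^ 2 * f + D * f ^ 3 = t := by
  obtain ⟨hs, hor⟩ := dichotomy hp hD hodd h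
  obtain ⟨ε, hε, hclose⟩ : ∃ ε : ℚ_[p], (ε = 1 ∨ ε = -1) ∧ ‖s - ε‖ < 1 := by
    rcases hor with h1 | h1
    · exact ⟨1, Or.inl rfl, h1⟩
    · exact ⟨-1, Or.inr rfl, by simpa [sub_neg_eq_add] using h1⟩
  obtain ⟨e, he, hce, he1⟩ := cheb_root hp hs hε hclose
  have h3 : ‖(3 : ℚ_[p])‖ = 1 := by
    have := norm_natCast_eq_one (p := p) (n := 3)
      (fun hdvd => by have := Nat.le_of_dvd (by norm_num) hdvd; omega)
    simpa using this
  have hg : ‖4 * e ^ 2 - 1‖ = 1 := by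
    have hsplit : 4 * e ^ 2 - 1 = 3 + 4 * (e - ε) * (e + ε) := by
      rcases hε with rfl | rfl <;> ring
    have h4 : ‖(4 : ℚ_[p])‖ ≤ 1 := by
      have := Padic.norm_int_le_one (p := p) 4
      push_cast at this
      exact this
    have h5 : ‖e + ε‖ ≤ 1 := by
      refine le_trans (Padic.nonarchimedean e ε) (max_le he1 ?_)
      rcases hε with rfl | rfl <;> simp
    have hsmall : ‖4 * (e - ε) * (e + ε)‖ < 1 := by
      rw [norm_mul, norm_mul]
      calc ‖(4:ℚ_[p])‖ * ‖e - ε‖ * ‖e + ε‖ ≤ 1 * ‖e - ε‖ * 1 := by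
            apply mul_le_mul
            · exact mul_le_mul h4 le_rfl (norm_nonneg _) (by norm_num)
            · exact h5
            · exact norm_nonneg _
            · norm_num
        _ < 1 := by simpa using hce
    rw [hsplit, Padic.add_eq_max_of_ne (by rw [h3]; exact (by linarith [hsmall] : ‖(4:ℚ_[p]) * (e - ε) * (e + ε)‖ < 1).ne'), h3]
    exact max_eq_left (by linarith)
  have hgne : 4 * e ^ 2 - 1 ≠ 0 := by
    intro h0
    rw [h0] at hg
    simp at hg
  set f := t / (4 * e ^ 2 - 1) with hf
  have hDt : D * t ^ 2 = (e ^ 2 - 1) * (4 * e ^ 2 - 1) ^ 2 := by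
    have h1 : D * t ^ 2 = s ^ 2 - 1 := by linear_combination -h
    rw [h1, ← he]; ring
  have hDf : D * f ^ 2 = e ^ 2 - 1 := by
    rw [hf]
    field_simp
    linear_combination hDt
  have hfg : f * (4 * e ^ 2 - 1) = t := div_mul_cancel₀ t hgne
  exact ⟨e, f, by linear_combination 3 * e * hDf + he, by linear_combination f * hDf + hfg⟩

end CubeRamifiedAux

open CubeRamifiedAux in
open Polynomial in
/-- Let `p > 3` be a prime and `D ∈ ℚ_p*` of odd valuation, so that
`K = ℚ_p[t]/(t² − D)` is a ramified quadratic extension. If the norm of `δ ∈ K*` is a cube in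
`ℚ_p*`, then `δ` is a cube in `K*`. -/
theorem cube_of_norm_cube_ramified (p : ℕ) [Fact p.Prime] (hp : 3 < p)
    (D : ℚ_[p]) (hD : D ≠ 0) (hodd : Odd D.valuation) :
    ∀ δ : (AdjoinRoot (X ^ 2 - C D))ˣ,
      (∃ c : ℚ_[p]ˣ, (c : ℚ_[p]) ^ 3
          = Algebra.norm ℚ_[p] (δ : AdjoinRoot (X ^ 2 - C D))) →
      ∃ κ : (AdjoinRoot (X ^ 2 - C D))ˣ, κ ^ 3 = δ := by
  intro δ hδ
  obtain ⟨c, hc⟩ := hδ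
  have hmonic : (X ^ 2 - C D).Monic := monic_X_pow_sub_C D two_ne_zero
  have hdeg : (X ^ 2 - C D).natDegree = 2 := natDegree_X_pow_sub_C
  set K := AdjoinRoot (X ^ 2 - C D) with hK
  let θ : K := AdjoinRoot.root (X ^ 2 - C D)
  let aM : ℚ_[p] →+* K := algebraMap ℚ_[p] K
  have hθ : θ ^ 2 = aM D := by
    have h0 := AdjoinRoot.mk_self (f := X ^ 2 - C D)
    rw [map_sub, map_pow, AdjoinRoot.mk_X, AdjoinRoot.mk_C, sub_eq_zero] at h0
    exact h0
  let pb := AdjoinRoot.powerBasis' hmonic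
  let B : Module.Basis (Fin 2) ℚ_[p] K := pb.basis.reindex (finCongr hdeg)
  have hB : ∀ i : Fin 2, B i = θ ^ (i : ℕ) := by
    intro i
    rw [Module.Basis.reindex_apply, pb.basis_eq_pow]
    simp [pb, θ]
    rfl
  have hB0 : B 0 = 1 := by rw [hB 0]; norm_num
  have hB1 : B 1 = θ := by rw [hB 1]; norm_num
  have hcombo : ∀ a b : ℚ_[p], aM a + aM b * θ = a • B 0 + b • B 1 := by
    intro a b
    rw [hB0, hB1, Algebra.smul_def, Algebra.smul_def, mul_one]
  have hrepr0 : ∀ a b : ℚ_[p], B.repr (aM a + aM b * θ) 0 = a := by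
    intro a b
    rw [hcombo a b]
    simp [Module.Basis.repr_self, Finsupp.single_apply]
  have hrepr1 : ∀ a b : ℚ_[p], B.repr (aM a + aM b * θ) 1 = b := by
    intro a b
    rw [hcombo a b]
    simp [Module.Basis.repr_self, Finsupp.single_apply]
  have hnormform : ∀ a b : ℚ_[p], Algebra.norm ℚ_[p] (aM a + aM b * θ) = a ^ 2 - D * b ^ 2 := by
    intro a b
    rw [Algebra.norm_eq_matrix_det B, Matrix.det_fin_two]
    have hmul1 : (aM a + aM b * θ) * θ = aM (D * b) + aM a * θ := by
      rw [map_mul]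
      linear_combination (aM b) * hθ
    have e00 : Algebra.leftMulMatrix B (aM a + aM b * θ) 0 0 = a := by
      rw [Algebra.leftMulMatrix_eq_repr_mul, hB0, mul_one, hrepr0]
    have e10 : Algebra.leftMulMatrix B (aM a + aM b * θ) 1 0 = b := by
      rw [Algebra.leftMulMatrix_eq_repr_mul, hB0, mul_one, hrepr1]
    have e01 : Algebra.leftMulMatrix B (aM a + aM b * θ) 0 1 = D * b := by
      rw [Algebra.leftMulMatrix_eq_repr_mul, hB1, hmul1, hrepr0]
    have e11 : Algebra.leftMulMatrix B (aM a + aM b * θ) 1 1 = a := by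
      rw [Algebra.leftMulMatrix_eq_repr_mul, hB1, hmul1, hrepr1]
    rw [e00, e01, e10, e11]
    ring
  have hnormscalar : ∀ a : ℚ_[p], Algebra.norm ℚ_[p] (aM a) = a ^ 2 := by
    intro a
    have : aM a = aM a + aM 0 * θ := by simp
    rw [this, hnormform]
    ring
  -- the unit U = δ² · (image of c)⁻³
  let Cu : Kˣ := Units.map (aM : ℚ_[p] →* K) c
  let U : Kˣ := δ ^ 2 * (Cu⁻¹) ^ 3
  obtain ⟨s, t, hU⟩ : ∃ s t : ℚ_[p], (U : K) = aM s + aM t * θ := by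
    refine ⟨B.repr (U : K) 0, B.repr (U : K) 1, ?_⟩
    conv_lhs => rw [← B.sum_repr (U : K)]
    rw [Fin.sum_univ_two, hB0, hB1, Algebra.smul_def, Algebra.smul_def, mul_one]
  have hCu : (Cu : K) = aM (c : ℚ_[p]) := rfl
  have hCuinv : ((Cu⁻¹ : Kˣ) : K) = aM ((c : ℚ_[p])⁻¹) := by
    have h1 : (Cu⁻¹ : Kˣ) = Units.map (aM : ℚ_[p] →* K) c⁻¹ := by
      rw [MonoidHom.map_inv]
    rw [h1]
    simp [Units.coe_map, Units.val_inv_eq_inv_val]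
  have hcne : (c : ℚ_[p]) ≠ 0 := Units.ne_zero c
  have hNU : s ^ 2 - D * t ^ 2 = 1 := by
    have h1 : Algebra.norm ℚ_[p] (U : K) = (Algebra.norm ℚ_[p] (δ : K)) ^ 2 *
        (Algebra.norm ℚ_[p] ((Cu⁻¹ : Kˣ) : K)) ^ 3 := by
      rw [show (U : K) = (δ : K) ^ 2 * ((Cu⁻¹ : Kˣ) : K) ^ 3 from by
        rw [Units.val_mul, Units.val_pow_eq_pow_val, Units.val_pow_eq_pow_val]]
      rw [map_mul, map_pow, map_pow]
    rw [hU, hnormform] at h1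
    rw [hCuinv, hnormscalar] at h1
    rw [← hc] at h1
    rw [h1]
    field_simp
  obtain ⟨e, f, he, hf⟩ := solve_cheb hp hD hodd hNU
  set x : K := aM e + aM f * θ with hx
  have hx3 : x ^ 3 = (U : K) := by
    have hexp : x ^ 3 = aM (e ^ 3 + 3 * D * e * f ^ 2) + aM (3 * e ^ 2 * f + D * f ^ 3) * θ := by
      simp only [hx, map_add, map_mul, map_pow, map_ofNat]
      ring_nf
      show @Eq (AdjoinRoot (X ^ 2 - C D)) _ _
      linear_combination (3 * aM e * aM f ^ 2 + aM f ^ 3 * θ) * hθ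
    rw [hexp, he, hf, ← hU]
  have hxunit : x * (x ^ 2 * ((U⁻¹ : Kˣ) : K)) = 1 := by
    calc x * (x ^ 2 * ((U⁻¹ : Kˣ) : K)) = x ^ 3 * ((U⁻¹ : Kˣ) : K) := by change @Eq (AdjoinRoot (X ^ 2 - C D)) _ _; ring
      _ = (U : K) * ((U⁻¹ : Kˣ) : K) := by rw [hx3]
      _ = 1 := U.mul_inv
  let xu : Kˣ := ⟨x, x ^ 2 * ((U⁻¹ : Kˣ) : K), hxunit, by rw [mul_comm]; exact hxunit⟩
  have hxu3 : xu ^ 3 = U := by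
    ext
    rw [Units.val_pow_eq_pow_val]
    exact hx3
  have hkey : (Cu * xu) ^ 3 = δ ^ 2 := by
    rw [mul_pow, hxu3]
    show Cu ^ 3 * (δ ^ 2 * Cu⁻¹ ^ 3) = δ ^ 2
    rw [mul_left_comm, ← mul_pow, mul_inv_cancel, one_pow, mul_one]
  refine ⟨(Cu * xu) ^ 2 * δ⁻¹, ?_⟩
  calc ((Cu * xu) ^ 2 * δ⁻¹) ^ 3 = ((Cu * xu) ^ 3) ^ 2 * (δ⁻¹) ^ 3 := by
        rw [mul_pow, ← pow_mul, ← pow_mul]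
    _ = (δ ^ 2) ^ 2 * (δ⁻¹) ^ 3 := by rw [hkey]
    _ = δ := by group
end

section
/- Let F be a field of characteristic different from 2 and 3, let D ∈ F*, let K = F[t]/(t² − D) with τ the image of t, and let δ = u + vτ ∈ K* with u, v ∈ F and N_{K/F}(δ) = 1. If the binary cubic form v·x³ + 3u·x²y + 3vD·xy² + uD·y³ is reducible over F (i.e., has a linear factor over F), then δ is a cube in K*. -/
section Aux
open Polynomial
variable {F : Type*} [Field F] (D : F)

noncomputable def myB : Module.Basis (Fin 2) F (AdjoinRoot (X ^ 2 - C D)) :=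
  ((AdjoinRoot.powerBasis' (monic_X_pow_sub_C D two_ne_zero)).basis.reindex
    (finCongr (by simp [AdjoinRoot.powerBasis'_dim, natDegree_X_pow_sub_C])))

theorem myB_apply (i : Fin 2) : myB D i = AdjoinRoot.root (X ^ 2 - C D) ^ (i : ℕ) := by
  rw [myB, Module.Basis.reindex_apply, PowerBasis.basis_eq_pow]
  simp [AdjoinRoot.powerBasis'_gen]

local notation "K" => AdjoinRoot (X ^ 2 - C (D : F))
local notation "τ" => AdjoinRoot.root (X ^ 2 - C (D : F))

theorem tau_sq_s14 : (τ) ^ 2 = algebraMap F K D := by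
  have h : (AdjoinRoot.mk (X ^ 2 - C D)) (X ^ 2 - C D) = 0 := AdjoinRoot.mk_self
  rw [map_sub, map_pow, AdjoinRoot.mk_X, sub_eq_zero] at h
  rw [h]; rfl

theorem myB_repr (a b : F) (i : Fin 2) :
    (myB D).repr (algebraMap F K a + algebraMap F K b * τ) i
      = if i = 0 then a else b := by
  have hz : algebraMap F K a + algebraMap F K b * τ = a • myB D 0 + b • myB D 1 := by
    rw [myB_apply, myB_apply]
    simp [Algebra.smul_def]
  rw [hz, map_add, map_smul, map_smul, Module.Basis.repr_self, Module.Basis.repr_self]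
  fin_cases i <;> simp

theorem coords_eq_zero {a b : F}
    (h : algebraMap F K a + algebraMap F K b * τ = 0) : a = 0 ∧ b = 0 := by
  have h0 := myB_repr D a b 0
  have h1 := myB_repr D a b 1
  rw [h] at h0 h1
  norm_num at h0 h1
  exact ⟨h0.symm, h1.symm⟩

theorem norm_val (a b : F) :
    Algebra.norm F (algebraMap F K a + algebraMap F K b * τ) = a ^ 2 - D * b ^ 2 := by
  rw [Algebra.norm_eq_matrix_det (myB D), Matrix.det_fin_two]
  have e0 : ∀ j : Fin 2, (algebraMap F K a + algebraMap F K b * τ) * myB D j =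
      algebraMap F K (if j = 0 then a else b * D) + algebraMap F K (if j = 0 then b else a) * τ := by
    intro j
    have ht := tau_sq_s14 D
    fin_cases j
    · norm_num [myB_apply]
    · rw [AdjoinRoot.algebraMap_eq] at ht ⊢
      norm_num [myB_apply, map_mul, AdjoinRoot.algebraMap_eq]
      linear_combination AdjoinRoot.of (X ^ 2 - C D) b * ht
  simp only [Algebra.leftMulMatrix_eq_repr_mul, e0, myB_repr]
  simp
  ring
end Aux


open Polynomial in
/-- Let `F` be a field of characteristic ≠ 2, 3, `D ∈ F*`, `K = F[t]/(t² − D)`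
with `τ` the image of `t`, and let `δ = u + vτ ∈ K*` with `N_{K/F}(δ) = 1`. If the binary cubic
form `v·x³ + 3u·x²y + 3vD·xy² + uD·y³` is reducible over `F`, then `δ` is a cube in `K*`. -/
theorem cube_of_reducible_trace_form {F : Type*} [Field F]
    (h2 : (2 : F) ≠ 0) (h3 : (3 : F) ≠ 0) (D : F) (hD : D ≠ 0) (u v : F) :
    let K := AdjoinRoot (X ^ 2 - C D)
    let τ : K := AdjoinRoot.root (X ^ 2 - C D)
    let δ : K := algebraMap F K u + algebraMap F K v * τ
    IsUnit δ → Algebra.norm F δ = 1 →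
      BinaryCubic.Reducible (⟨v, u, v * D, u * D⟩ : BinaryCubic F) →
      ∃ κ : Kˣ, (κ : K) ^ 3 = δ := by
  intro K τ δ hunit hnorm hred
  set A := algebraMap F K with hA
  haveI : Nontrivial K := AdjoinRoot.nontrivial _ (by rw [degree_X_pow_sub_C (by norm_num : 0 < 2)]; norm_num)
  have ht : τ ^ 2 = A D := tau_sq_s14 D
  have hUV : u ^ 2 - D * v ^ 2 = 1 := by rw [← norm_val D u v]; exact hnorm
  obtain ⟨l₁, l₂, q₁, q₂, q₃, hf⟩ := hred
  by_cases hl : l₁ = 0 ∧ l₂ = 0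
  · exfalso
    have hv : v = 0 := by
      have := hf 1 0
      simp [BinaryCubic.eval, hl.1, hl.2] at this
      exact this
    have hu : u = 0 := by
      have := hf 0 1
      simp [BinaryCubic.eval, hl.1, hl.2] at this
      rcases this with h | h
      · exact h
      · exact absurd h hD
    have hδ0 : δ = 0 := by
      show A u + A v * τ = 0
      rw [hu, hv]; simp
    rw [hδ0] at hunit
    exact not_isUnit_zero hunit
  · push_neg at hl
    set x₀ := l₂ with hx₀
    set y₀ := -l₁ with hy₀
    have hxy : ¬(x₀ = 0 ∧ y₀ = 0) := by
      rintro ⟨hx, hy⟩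
      have hl1 : -l₁ = 0 := by rw [← hy₀]; exact hy
      exact hl (neg_eq_zero.mp hl1) hx
    have hroot : v * x₀ ^ 3 + 3 * u * x₀ ^ 2 * y₀ + 3 * (v * D) * x₀ * y₀ ^ 2
        + u * D * y₀ ^ 3 = 0 := by
      have := hf l₂ (-l₁)
      simp only [BinaryCubic.eval] at this
      rw [hx₀, hy₀]
      linear_combination this
    set ξ : K := A x₀ + A y₀ * τ with hξ
    set w : F := u * x₀ ^ 3 + 3 * (v * D) * x₀ ^ 2 * y₀ + 3 * (u * D) * x₀ * y₀ ^ 2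
      + v * D ^ 2 * y₀ ^ 3 with hw
    have expand : δ * ξ ^ 3 = A w
        + A (v * x₀ ^ 3 + 3 * u * x₀ ^ 2 * y₀ + 3 * (v * D) * x₀ * y₀ ^ 2 + u * D * y₀ ^ 3) * τ := by
      show (A u + A v * τ) * (A x₀ + A y₀ * τ) ^ 3 = _
      rw [hw]
      simp only [map_add, map_mul, map_pow, map_ofNat]
      linear_combination ((A u + A v * τ) * (3 * A x₀ * (A y₀) ^ 2 + (A y₀) ^ 3 * τ)
        + A v * (3 * (A x₀) ^ 2 * A y₀ + (A y₀) ^ 3 * A D)) * ht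
    have hkey : δ * ξ ^ 3 = A w := by
      rw [expand, hroot, map_zero, zero_mul, add_zero]
    have haev : aeval (-τ) (X ^ 2 - C D : F[X]) = 0 := by
      simp only [map_sub, aeval_X_pow, aeval_C]
      rw [neg_pow, ht]
      norm_num [hA]
    let σ : K →ₐ[F] K := AdjoinRoot.liftAlgHom (X ^ 2 - C D) (Algebra.ofId F K) (-τ) haev
    have hστ : σ τ = -τ := AdjoinRoot.liftAlgHom_root _ _ _ haev
    have hσA : ∀ a : F, σ (A a) = A a := fun a => σ.commutes a
    have hconj : ∀ a b : F, (A a + A b * τ) * (A a - A b * τ) = A (a ^ 2 - D * b ^ 2) := by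
      intro a b
      simp only [map_sub, map_mul, map_pow]
      linear_combination (-(A b ^ 2)) * ht
    have hσδ : σ δ = A u - A v * τ := by
      show σ (A u + A v * τ) = _
      rw [map_add, map_mul, hσA, hσA, hστ]
      ring
    have hσξ : σ ξ = A x₀ - A y₀ * τ := by
      rw [hξ, map_add, map_mul, hσA, hσA, hστ]
      ring
    have hδσδ : δ * σ δ = 1 := by
      rw [hσδ]
      show (A u + A v * τ) * _ = 1
      rw [hconj u v, hUV, map_one]
    set n : F := x₀ ^ 2 - D * y₀ ^ 2 with hn
    have hξσξ : ξ * σ ξ = A n := by rw [hσξ, hξ, hconj x₀ y₀]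
    have hσkey : σ δ * (σ ξ) ^ 3 = A w := by
      have := congrArg σ hkey
      rw [map_mul, map_pow, hσA] at this
      exact this
    have hnw : n ^ 3 = w ^ 2 := by
      apply (algebraMap F K).injective
      show A (n ^ 3) = A (w ^ 2)
      calc A (n ^ 3) = (δ * σ δ) * (ξ * σ ξ) ^ 3 := by
            rw [hδσδ, hξσξ, one_mul, map_pow]
        _ = (δ * ξ ^ 3) * (σ δ * (σ ξ) ^ 3) := by ring
        _ = A (w ^ 2) := by rw [hkey, hσkey, ← map_mul]; exact congrArg A (sq w).symm
    have h8 : (8 : F) ≠ 0 := by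
      have := pow_ne_zero 3 h2
      norm_num at this
      exact this
    have hw0 : w ≠ 0 := by
      intro hw'
      have hn0 : n = 0 := by
        have : n ^ 3 = 0 := by rw [hnw, hw']; ring
        exact pow_eq_zero_iff (by norm_num) |>.mp this
      have hξ3 : ξ ^ 3 = 0 := by
        have h0 : δ * ξ ^ 3 = 0 := by rw [hkey, hw', map_zero]
        exact (IsUnit.mul_right_eq_zero hunit).mp h0
      have hexp : ξ ^ 3 = A (x₀ ^ 3 + 3 * D * x₀ * y₀ ^ 2) + A (3 * x₀ ^ 2 * y₀ + D * y₀ ^ 3) * τ := by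
        rw [hξ]
        simp only [map_add, map_mul, map_pow, map_ofNat]
        linear_combination (3 * A x₀ * (A y₀) ^ 2 + (A y₀) ^ 3 * τ) * ht
      have hc := coords_eq_zero D (by rw [← hexp]; exact hξ3)
      obtain ⟨hcx, hcy⟩ := hc
      by_cases hx : x₀ = 0
      · apply hxy
        refine ⟨hx, ?_⟩
        rw [hx] at hcy
        have : D * y₀ ^ 3 = 0 := by linear_combination hcy
        have hy3 : y₀ ^ 3 = 0 := by
          rcases mul_eq_zero.mp this with h | h
          · exact absurd h hD
          · exact h
        exact pow_eq_zero_iff (by norm_num) |>.mp hy3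
      · by_cases hy : y₀ = 0
        · rw [hy] at hcx
          have : x₀ ^ 3 = 0 := by linear_combination hcx
          exact hx (pow_eq_zero_iff (by norm_num) |>.mp this)
        · have h8' : 8 * (D * (x₀ * y₀ ^ 3)) = 0 := by
            linear_combination 3 * y₀ * hcx - x₀ * hcy
          have : x₀ * y₀ ^ 3 = 0 := by
            rcases mul_eq_zero.mp h8' with h | h
            · exact absurd h h8
            · rcases mul_eq_zero.mp h with h' | h'
              · exact absurd h' hD
              · exact h'
          rcases mul_eq_zero.mp this with h | h
          · exact hx h
          · exact hy (pow_eq_zero_iff (by norm_num) |>.mp h)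
    have hn0 : n ≠ 0 := by
      intro h
      apply hw0
      have : w ^ 2 = 0 := by rw [← hnw, h]; ring
      exact pow_eq_zero_iff (by norm_num) |>.mp this
    have hξu : IsUnit ξ := by
      apply IsUnit.of_mul_eq_one (σ ξ * A n⁻¹)
      rw [← mul_assoc, hξσξ, ← map_mul, mul_inv_cancel₀ hn0, map_one]
    set c : F := w / n with hc
    have hc3 : c ^ 3 = w := by
      rw [hc, div_pow]
      rw [div_eq_iff (pow_ne_zero 3 hn0)]
      linear_combination -w * hnw
    have hc0 : c ≠ 0 := div_ne_zero hw0 hn0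
    have hcu : IsUnit (A c) := (isUnit_iff_ne_zero.mpr hc0).map (algebraMap F K)
    refine ⟨hcu.unit * hξu.unit⁻¹, ?_⟩
    have hinv : (↑hξu.unit⁻¹ : K) * ξ = 1 := by
      nth_rewrite 2 [← hξu.unit_spec]
      exact Units.inv_mul _
    apply (hξu.pow 3).mul_right_cancel
    calc (↑(hcu.unit * hξu.unit⁻¹) : K) ^ 3 * ξ ^ 3
        = (A c) ^ 3 * ((↑hξu.unit⁻¹ : K) * ξ) ^ 3 := by
          rw [Units.val_mul, hcu.unit_spec]; ring
      _ = A w := by rw [hinv, one_pow, mul_one, ← map_pow, hc3]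
      _ = δ * ξ ^ 3 := hkey.symm
end
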